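/- Let R be a 2-torsion free ring with unity and r ≥ 2 an integer. Let T : M_r(R) → M_r(R) be an additive mapping satisfying 2T(x²) = T(x)x + xT₀(x) for all x ∈ M_r(R), where T₀ : M_r(R) → M_r(R) is an additive mapping satisfying 2T₀(x²) = T₀(x)x + xT₀(x) for all x ∈ M_r(R). Then T = T₀, and T is a two-sided centralizer. -/

import Mathlib

open Matrix

theorem vukman_identity_matrix_pair {R : Type*} [Ring R]
    (htf : ∀ a : R, 2 • a = 0 → a = 0)
    (r : ℕ) (hr : 2 ≤ r)
    (T T₀ : Matrix (Fin r) (Fin r) R → Matrix (Fin r) (Fin r) R)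
    (haddT : ∀ x y, T (x + y) = T x + T y)
    (haddT₀ : ∀ x y, T₀ (x + y) = T₀ x + T₀ y)
    (h : ∀ x, 2 • T (x ^ 2) = T x * x + x * T₀ x)
    (h₀ : ∀ x, 2 • T₀ (x ^ 2) = T₀ x * x + x * T₀ x) :
    T = T₀ ∧ ∀ x y, T (x * y) = T x * y ∧ T (x * y) = x * T y := by
  have htfM : ∀ m : Matrix (Fin r) (Fin r) R, 2 • m = 0 → m = 0 := by
    intro m hm
    ext p q
    refine htf _ ?_
    have := congrFun (congrFun hm p) q
    simpa only [Matrix.smul_apply, Matrix.zero_apply] using this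
  have cancel2 : ∀ u v : Matrix (Fin r) (Fin r) R, 2 • u = 2 • v → u = v := by
    intro u v huv
    have := htfM (u - v) (by rw [smul_sub, huv, sub_self])
    exact sub_eq_zero.mp this
  have h₀' : ∀ x : Matrix (Fin r) (Fin r) R, 2 • T₀ (x * x) = T₀ x * x + x * T₀ x := by
    intro x; rw [← pow_two]; exact h₀ x
  have h' : ∀ x : Matrix (Fin r) (Fin r) R, 2 • T (x * x) = T x * x + x * T₀ x := by
    intro x; rw [← pow_two]; exact h x
  -- linearization of h₀
  have lin₀ : ∀ x y : Matrix (Fin r) (Fin r) R, 2 • T₀ (x * y + y * x)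
      = T₀ x * y + T₀ y * x + x * T₀ y + y * T₀ x := by
    intro x y
    have e1 := h₀' (x + y)
    have hxy : (x + y) * (x + y) = x * x + (x * y + y * x) + y * y := by noncomm_ring
    rw [hxy, haddT₀ (x * x + (x * y + y * x)) (y * y), haddT₀ (x * x) (x * y + y * x),
      smul_add, smul_add, h₀' x, h₀' y, haddT₀ x y] at e1
    have e2 : 2 • T₀ (x * y + y * x)
        = (T₀ x + T₀ y) * (x + y) + (x + y) * (T₀ x + T₀ y)
          - (T₀ x * x + x * T₀ x) - (T₀ y * y + y * T₀ y) := by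
      rw [eq_sub_iff_add_eq, eq_sub_iff_add_eq, ← e1]; abel
    rw [e2]; noncomm_ring
  -- 2 T₀ x = a x + x a, where a = T₀ 1
  have P₀ : ∀ x : Matrix (Fin r) (Fin r) R, 2 • T₀ x = T₀ 1 * x + x * T₀ 1 := by
    intro x
    have e := lin₀ x 1
    rw [mul_one, one_mul, haddT₀, mul_one, one_mul] at e
    apply add_left_cancel (a := 2 • T₀ x)
    rw [← smul_add, e]; abel
  -- key identity for a
  have keyA : ∀ x : Matrix (Fin r) (Fin r) R,
      T₀ 1 * (x * x) + (x * x) * T₀ 1 = 2 • (x * T₀ 1 * x) := by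
    intro x
    have hA : T₀ 1 * (x * x) + (x * x) * T₀ 1 = T₀ x * x + x * T₀ x :=
      (P₀ (x * x)).symm.trans (h₀' x)
    have e3 : (T₀ 1 * (x * x) + (x * x) * T₀ 1) + (T₀ 1 * (x * x) + (x * x) * T₀ 1)
        = (T₀ 1 * (x * x) + (x * x) * T₀ 1) + 2 • (x * T₀ 1 * x) := by
      calc (T₀ 1 * (x * x) + (x * x) * T₀ 1) + (T₀ 1 * (x * x) + (x * x) * T₀ 1)
          = (T₀ x * x + x * T₀ x) + (T₀ x * x + x * T₀ x) := by rw [hA]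
        _ = (2 • T₀ x) * x + x * (2 • T₀ x) := by
            simp only [two_smul]; noncomm_ring
        _ = (T₀ 1 * x + x * T₀ 1) * x + x * (T₀ 1 * x + x * T₀ 1) := by rw [P₀ x]
        _ = (T₀ 1 * (x * x) + (x * x) * T₀ 1) + 2 • (x * T₀ 1 * x) := by
            simp only [two_smul]; noncomm_ring
    exact add_left_cancel e3
  -- linearized key identity
  have linkey : ∀ x y : Matrix (Fin r) (Fin r) R,
      T₀ 1 * (x * y) + T₀ 1 * (y * x) + (x * y) * T₀ 1 + (y * x) * T₀ 1
      = 2 • (x * T₀ 1 * y) + 2 • (y * T₀ 1 * x) := by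
    intro x y
    have e := keyA (x + y)
    have h1 : T₀ 1 * ((x + y) * (x + y)) + ((x + y) * (x + y)) * T₀ 1
        = (T₀ 1 * (x * x) + (x * x) * T₀ 1) + ((T₀ 1 * (y * y) + (y * y) * T₀ 1)
          + (T₀ 1 * (x * y) + T₀ 1 * (y * x) + (x * y) * T₀ 1 + (y * x) * T₀ 1)) := by
      noncomm_ring
    have h2 : (x + y) * T₀ 1 * (x + y)
        = x * T₀ 1 * x + (y * T₀ 1 * y + (x * T₀ 1 * y + y * T₀ 1 * x)) := by
      noncomm_ring
    rw [h1, h2, keyA x, keyA y, smul_add, smul_add] at e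
    have e4 := add_left_cancel (add_left_cancel e)
    rw [e4, smul_add]
  -- a is off-diagonal zero
  have offdiag : ∀ i j : Fin r, i ≠ j → T₀ 1 i j = 0 := by
    intro i j hij
    have hx : (Matrix.single j i (1:R)) * (Matrix.single j i 1) = 0 :=
      Matrix.single_mul_single_of_ne _ _ _ _ hij _
    have e := keyA (Matrix.single j i 1)
    rw [hx, mul_zero, zero_mul, add_zero] at e
    have e0 : (Matrix.single j i (1:R) * T₀ 1 * Matrix.single j i 1) = 0 :=
      htfM _ e.symm
    have := congrFun (congrFun e0 j) i
    simpa using this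
  -- diagonal entries are all equal
  have diagB : ∀ i j : Fin r, i ≠ j → T₀ 1 i i = T₀ 1 j j := by
    intro i j hij
    have e := linkey (Matrix.single i i (1:R)) (Matrix.single i j 1)
    rw [Matrix.single_mul_single_same, Matrix.single_mul_single_of_ne _ _ _ _ hij.symm, one_mul,
      mul_zero, zero_mul, add_zero, add_zero] at e
    have e' := congrFun (congrFun e i) j
    simp [hij, Ne.symm hij, two_smul] at e'
    exact e'.symm
  -- diagonal entries commute with everything
  have commC : ∀ i j : Fin r, i ≠ j → ∀ b : R, T₀ 1 i i * b = b * T₀ 1 i i := by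
    intro i j hij b
    have e := linkey (Matrix.single i j (1:R)) (Matrix.single j i b)
    rw [Matrix.single_mul_single_same, Matrix.single_mul_single_same, one_mul, mul_one] at e
    have e' := congrFun (congrFun e i) i
    simp [hij, Ne.symm hij, two_smul] at e'
    rw [← diagB i j hij] at e'
    exact (add_left_cancel e').symm
  -- set up indices
  have hi₀j₀ : (⟨0, by omega⟩ : Fin r) ≠ ⟨1, by omega⟩ := by
    simp [Fin.ext_iff]
  have diagAll : ∀ p : Fin r, T₀ 1 p p = T₀ 1 (⟨0, by omega⟩ : Fin r) ⟨0, by omega⟩ := by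
    intro p
    by_cases hp : p = (⟨0, by omega⟩ : Fin r)
    · rw [hp]
    · exact diagB p _ hp
  have ccomm : ∀ b : R, T₀ 1 (⟨0, by omega⟩ : Fin r) ⟨0, by omega⟩ * b
      = b * T₀ 1 (⟨0, by omega⟩ : Fin r) ⟨0, by omega⟩ := commC _ _ hi₀j₀
  -- a is central
  have acomm : ∀ m : Matrix (Fin r) (Fin r) R, T₀ 1 * m = m * T₀ 1 := by
    intro m
    ext p q
    rw [Matrix.mul_apply, Matrix.mul_apply]
    rw [Finset.sum_eq_single p (fun k _ hk => by rw [offdiag p k (Ne.symm hk), zero_mul])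
      (fun hp => absurd (Finset.mem_univ p) hp)]
    rw [Finset.sum_eq_single q (fun k _ hk => by rw [offdiag k q hk, mul_zero])
      (fun hq => absurd (Finset.mem_univ q) hq)]
    rw [diagAll p, diagAll q, ccomm]
  have T₀eq : ∀ x : Matrix (Fin r) (Fin r) R, T₀ x = T₀ 1 * x := by
    intro x
    apply cancel2
    rw [P₀ x, two_smul, acomm x]
  -- the difference map S x = T x - T₀ 1 * x
  have keyS : ∀ x : Matrix (Fin r) (Fin r) R,
      2 • (T (x * x) - T₀ 1 * (x * x)) = (T x - T₀ 1 * x) * x := by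
    intro x
    have hxa : x * T₀ x = T₀ 1 * (x * x) := by
      rw [T₀eq x, ← mul_assoc, ← acomm x, mul_assoc]
    rw [smul_sub, h' x, hxa, sub_mul, two_smul, mul_assoc]
    abel
  have haddS : ∀ x y : Matrix (Fin r) (Fin r) R,
      T (x + y) - T₀ 1 * (x + y) = (T x - T₀ 1 * x) + (T y - T₀ 1 * y) := by
    intro x y
    rw [haddT, mul_add]
    abel
  have linS : ∀ x y : Matrix (Fin r) (Fin r) R,
      2 • (T (x * y + y * x) - T₀ 1 * (x * y + y * x))
      = (T x - T₀ 1 * x) * y + (T y - T₀ 1 * y) * x := by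
    intro x y
    have e1 := keyS (x + y)
    have hxy : (x + y) * (x + y) = x * x + (x * y + y * x) + y * y := by noncomm_ring
    rw [hxy, haddS (x * x + (x * y + y * x)) (y * y), haddS (x * x) (x * y + y * x),
      smul_add, smul_add, keyS x, keyS y, haddS x y] at e1
    have e2 : 2 • (T (x * y + y * x) - T₀ 1 * (x * y + y * x))
        = ((T x - T₀ 1 * x) + (T y - T₀ 1 * y)) * (x + y)
          - (T x - T₀ 1 * x) * x - (T y - T₀ 1 * y) * y := by
      rw [eq_sub_iff_add_eq, eq_sub_iff_add_eq, ← e1]; abel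
    rw [e2]; noncomm_ring
  -- S vanishes on diagonal idempotent units
  have Se0 : ∀ i : Fin r, T (Matrix.single i i (1:R)) - T₀ 1 * Matrix.single i i 1 = 0 := by
    intro i
    have hEE : (Matrix.single i i (1:R)) * Matrix.single i i 1 = Matrix.single i i 1 := by
      rw [Matrix.single_mul_single_same, one_mul]
    have e := keyS (Matrix.single i i 1)
    rw [hEE] at e
    have e2 := congrArg (· * Matrix.single i i (1:R)) e
    simp only [smul_mul_assoc, mul_assoc, hEE] at e2
    rw [two_smul] at e2
    have hz := (add_eq_right).mp e2
    rw [hz] at e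
    exact htfM _ e
  -- S vanishes on off-diagonal units
  have Soff : ∀ i j : Fin r, i ≠ j → ∀ b : R,
      T (Matrix.single i j b) - T₀ 1 * Matrix.single i j b = 0 := by
    intro i j hij b
    have e := linS (Matrix.single i j b) (Matrix.single j j 1)
    rw [Matrix.single_mul_single_same, Matrix.single_mul_single_of_ne _ _ _ _ hij.symm, mul_one,
      add_zero, Se0 j, zero_mul, add_zero] at e
    have hEE : (Matrix.single j j (1:R)) * Matrix.single j j 1 = Matrix.single j j 1 := by
      rw [Matrix.single_mul_single_same, one_mul]
    have e2 := congrArg (· * Matrix.single j j (1:R)) e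
    simp only [smul_mul_assoc, mul_assoc, hEE] at e2
    rw [two_smul] at e2
    have hz := (add_eq_right).mp e2
    rw [hz] at e
    exact htfM _ e
  -- S vanishes on diagonal units
  have Sdiag : ∀ i : Fin r, ∀ b : R,
      T (Matrix.single i i b) - T₀ 1 * Matrix.single i i b = 0 := by
    intro i b
    ext p q
    rw [Matrix.zero_apply]
    by_cases hq : q = i
    · subst hq
      obtain ⟨j, hj⟩ : ∃ j : Fin r, j ≠ q := by
        by_cases hq0 : q = (⟨0, by omega⟩ : Fin r)
        · exact ⟨⟨1, by omega⟩, by rw [hq0]; exact hi₀j₀.symm⟩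
        · exact ⟨⟨0, by omega⟩, fun hh => hq0 hh.symm⟩
      have e := linS (Matrix.single q q b) (Matrix.single q j 1)
      rw [Matrix.single_mul_single_same, Matrix.single_mul_single_of_ne _ _ _ _ hj, mul_one,
        add_zero, Soff q j (Ne.symm hj), Soff q j (Ne.symm hj) 1, zero_mul, add_zero,
        smul_zero] at e
      have e' := congrFun (congrFun e.symm p) j
      rw [Matrix.mul_single_apply_same] at e'
      simpa using e'
    · have e := linS (Matrix.single i i b) (Matrix.single q i 1)
      rw [Matrix.single_mul_single_of_ne _ _ _ _ (fun hh => hq hh.symm),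
        Matrix.single_mul_single_same, one_mul, zero_add,
        Soff q i (fun hh => hq hh), Soff q i (fun hh => hq hh) 1,
        zero_mul, add_zero, smul_zero] at e
      have e' := congrFun (congrFun e.symm p) i
      rw [Matrix.mul_single_apply_same] at e'
      simpa using e'
  -- S vanishes everywhere
  have Szero : ∀ m : Matrix (Fin r) (Fin r) R, T m - T₀ 1 * m = 0 := by
    intro m
    have key : (AddMonoidHom.mk' (fun x : Matrix (Fin r) (Fin r) R => T x - T₀ 1 * x)
        haddS) m = 0 := by
      conv_lhs => rw [matrix_eq_sum_single m]
      rw [map_sum]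
      refine Finset.sum_eq_zero fun i _ => ?_
      rw [map_sum]
      refine Finset.sum_eq_zero fun j _ => ?_
      show T (Matrix.single i j (m i j)) - T₀ 1 * Matrix.single i j (m i j) = 0
      by_cases hij : i = j
      · subst hij; exact Sdiag i _
      · exact Soff i j hij _
    exact key
  have Teq : ∀ x : Matrix (Fin r) (Fin r) R, T x = T₀ 1 * x := fun x =>
    sub_eq_zero.mp (Szero x)
  refine ⟨funext fun x => ?_, fun x y => ⟨?_, ?_⟩⟩
  · rw [Teq x, T₀eq x]
  · rw [Teq (x * y), Teq x, mul_assoc]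
  · rw [Teq (x * y), Teq y,
      show x * (T₀ 1 * y) = T₀ 1 * (x * y) from by rw [← mul_assoc, ← acomm x, mul_assoc]]
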